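/- Lemma (Section 3.3, last lemma): The identities σ3: xsxyty ≈ xsyxty and x²y ≈ yx² imply the identity w_n[π,τ] ≈ w_n'[π,τ] for every n ≥ 1 and all permutations π, τ of {1,…,n}; that is, every monoid satisfying xsxyty ≈ xsyxty and x²y ≈ yx² satisfies w_n[π,τ] ≈ w_n'[π,τ] for all such n, π, τ. -/

import Mathlib

/-! Common definitions: words, fully invariant congruences, identities and
named varieties from the paper. -/

/-- The free monoid over the countably infinite alphabet `ℕ`. -/
abbrev FM : Type := FreeMonoid ℕ

/-- The letters `x, y, z, s, t, h` (pairwise distinct elements of `ℕ`). -/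
def xL : FM := FreeMonoid.of 0
def yL : FM := FreeMonoid.of 1
def zL : FM := FreeMonoid.of 2
def sL : FM := FreeMonoid.of 3
def tL : FM := FreeMonoid.of 4
def hL : FM := FreeMonoid.of 5
/-- The indexed letters `z_i` and `t_i` (0-based; pairwise distinct, and distinct
from the named letters above). -/
def zV (i : ℕ) : FM := FreeMonoid.of (10 + 2 * i)
def tV (i : ℕ) : FM := FreeMonoid.of (11 + 2 * i)

/-- A congruence on the free monoid is fully invariant if it is stable under all
monoid endomorphisms. -/
def IsFullyInvariant (θ : Con FM) : Prop :=
  ∀ (σ : FM →* FM) (u v : FM), θ u v → θ (σ u) (σ v)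

/-- The smallest fully invariant congruence on `FM` containing a set of identities. -/
def fiCon (E : Set (FM × FM)) : Con FM :=
  sInf {c : Con FM | IsFullyInvariant c ∧ ∀ p ∈ E, c p.1 p.2}

/-- Two congruences (relations) permute: `α ∘ β = β ∘ α`. -/
def Permute (α β : Con FM) : Prop :=
  Relation.Comp (⇑α) (⇑β) = Relation.Comp (⇑β) (⇑α)

/-- A monoid `M` satisfies the identity `p.1 ≈ p.2`. -/
def MSatisfies (M : Type*) [Monoid M] (p : FM × FM) : Prop :=
  ∀ φ : FM →* M, φ p.1 = φ p.2

/-- A monoid `M` satisfies all identities of a congruence `θ`. -/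
def SatisfiesAll (θ : Con FM) (M : Type*) [Monoid M] : Prop :=
  ∀ u v : FM, θ u v → MSatisfies M (u, v)

/-- Every element of the monoid `M` has a two-sided inverse, i.e. `M` is a group. -/
def IsGroupMonoid (M : Type*) [Monoid M] : Prop :=
  ∀ m : M, ∃ m' : M, m * m' = 1 ∧ m' * m = 1

/-- The dual of a congruence: `θ^δ = {(rev u, rev v) : (u, v) ∈ θ}`. -/
def dualCon (θ : Con FM) : Con FM where
  r a b := θ a.reverse b.reverse
  iseqv := ⟨fun _ => θ.refl _, fun h => θ.symm h, fun h h' => θ.trans h h'⟩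
  mul' := fun {a b c d} h₁ h₂ => by
    show θ (a * c).reverse (b * d).reverse
    rw [FreeMonoid.reverse_mul, FreeMonoid.reverse_mul]
    exact θ.mul h₂ h₁

/-- σ1 : `xysxty ≈ yxsxty`. -/
def idσ1 : FM × FM := (xL*yL*sL*xL*tL*yL, yL*xL*sL*xL*tL*yL)
/-- σ2 : `xsytxy ≈ xsytyx`. -/
def idσ2 : FM × FM := (xL*sL*yL*tL*xL*yL, xL*sL*yL*tL*yL*xL)
/-- σ3 : `xsxyty ≈ xsyxty`. -/
def idσ3 : FM × FM := (xL*sL*xL*yL*tL*yL, xL*sL*yL*xL*tL*yL)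
/-- α1 : `xysxtxhy ≈ yxsxtxhy`. -/
def idα1 : FM × FM := (xL*yL*sL*xL*tL*xL*hL*yL, yL*xL*sL*xL*tL*xL*hL*yL)
/-- α2 : `xysxtyhx ≈ yxsxtyhx`. -/
def idα2 : FM × FM := (xL*yL*sL*xL*tL*yL*hL*xL, yL*xL*sL*xL*tL*yL*hL*xL)
/-- α3 : `xysytxhx ≈ yxsytxhx`. -/
def idα3 : FM × FM := (xL*yL*sL*yL*tL*xL*hL*xL, yL*xL*sL*yL*tL*xL*hL*xL)

/-- `aIdent i` is the identity `α_i` for `i ∈ {1, 2, 3}`. -/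
def aIdent (i : ℕ) : FM × FM := if i = 1 then idα1 else if i = 2 then idα2 else idα3
/-- `bIdent i` is `β_i`, obtained from `α_i` by reversing both sides. -/
def bIdent (i : ℕ) : FM × FM := ((aIdent i).1.reverse, (aIdent i).2.reverse)

/-- The ordered product `f 0 * f 1 * ⋯ * f (n-1)`. -/
def prodRange (n : ℕ) (f : ℕ → FM) : FM := ((List.range n).map f).prod
/-- The ordered product `f 0 * f 1 * ⋯ * f (n-1)` over `Fin n`. -/
def prodFin (n : ℕ) (f : Fin n → FM) : FM := ((List.finRange n).map f).prod

/-- The word `w_n[π,τ]` (0-based indices). -/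
def wWord (n : ℕ) (π τ : Equiv.Perm (Fin n)) : FM :=
  prodRange n (fun i => zV i * tV i) * xL *
    prodFin n (fun i => zV (π i) * zV (n + τ i)) * xL *
    prodRange n (fun i => tV (n + i) * zV (n + i))

/-- The word `w_n'[π,τ]`. -/
def wWord' (n : ℕ) (π τ : Equiv.Perm (Fin n)) : FM :=
  prodRange n (fun i => zV i * tV i) * (xL * xL) *
    prodFin n (fun i => zV (π i) * zV (n + τ i)) *
    prodRange n (fun i => tV (n + i) * zV (n + i))

/-- The word `c_{n,m}[ρ]`. -/
def cWord (n m : ℕ) (ρ : Equiv.Perm (Fin (n + m))) : FM :=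
  prodRange n (fun i => zV i * tV i) * (xL * yL) * tL *
    prodRange m (fun i => zV (n + i) * tV (n + i)) * xL *
    prodFin (n + m) (fun i => zV (ρ i)) * yL

/-- The word `c'_{n,m}[ρ]`. -/
def cWord' (n m : ℕ) (ρ : Equiv.Perm (Fin (n + m))) : FM :=
  prodRange n (fun i => zV i * tV i) * (yL * xL) * tL *
    prodRange m (fun i => zV (n + i) * tV (n + i)) * xL *
    prodFin (n + m) (fun i => zV (ρ i)) * yL

/-- The word `c_{n,m,k}[ρ]`. -/
def cWord3 (n m k : ℕ) (ρ : Equiv.Perm (Fin (n + m + k))) : FM :=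
  prodRange n (fun i => zV i * tV i) * (xL * yL) * tL *
    prodRange m (fun i => zV (n + i) * tV (n + i)) * xL *
    prodFin (n + m + k) (fun i => zV (ρ i)) * yL *
    prodRange k (fun i => tV (n + m + i) * zV (n + m + i))

/-- The word `c'_{n,m,k}[ρ]`. -/
def cWord3' (n m k : ℕ) (ρ : Equiv.Perm (Fin (n + m + k))) : FM :=
  prodRange n (fun i => zV i * tV i) * (yL * xL) * tL *
    prodRange m (fun i => zV (n + i) * tV (n + i)) * xL *
    prodFin (n + m + k) (fun i => zV (ρ i)) * yL *
    prodRange k (fun i => tV (n + m + i) * zV (n + m + i))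

/-- The equational theory of `D_∞`. -/
def θDinf : Con FM :=
  fiCon {(xL^2, xL^3), (xL^2 * yL, yL * xL^2), idσ1, idσ2, idσ3}
/-- The equational theory of `N`. -/
def θN : Con FM :=
  fiCon {(xL^2, xL^3), (xL^2 * yL, yL * xL^2), (xL*yL*xL*zL*xL, xL^2*yL*zL), idσ2, idσ3}
/-- The equational theory of `K`. -/
def θK : Con FM :=
  fiCon {(xL^2*yL, xL^2*yL*xL), (xL*yL*xL, xL*yL*xL^2), (xL^2*yL^2, yL^2*xL^2)}
/-- The identity basis of `P_n`. -/
def basisP (n : ℕ) : Set (FM × FM) :=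
  {(xL^n, xL^(n+1)), (xL^n * yL, yL * xL^n), (xL^2*yL, xL*yL*xL)}
/-- The equational theory of `P_n`. -/
def θP (n : ℕ) : Con FM := fiCon (basisP n)
/-- The equational theory of `R`. -/
def θR : Con FM :=
  fiCon ({(xL^2, xL^3), (xL^2*yL, yL*xL^2), idσ1, idσ2} ∪
    {p : FM × FM | ∃ (n : ℕ) (π τ : Equiv.Perm (Fin n)),
        1 ≤ n ∧ p = (wWord n π τ, wWord' n π τ)})
/-- The equational theory of `Q_{r,s}`. -/
def θQ (r s : ℕ) : Con FM :=
  fiCon ({(xL^2, xL^3), (xL^2*yL, yL*xL^2), idσ3} ∪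
    {p : FM × FM | ∃ i : ℕ, (i = 1 ∨ i = 2 ∨ i = 3) ∧ i ≠ r ∧ p = aIdent i} ∪
    {p : FM × FM | ∃ j : ℕ, (j = 1 ∨ j = 2 ∨ j = 3) ∧ j ≠ s ∧ p = bIdent j} ∪
    {p : FM × FM | ∃ (n m : ℕ) (ρ : Equiv.Perm (Fin (n + m))),
        p = (cWord n m ρ, cWord' n m ρ) ∨
        p = ((cWord n m ρ).reverse, (cWord' n m ρ).reverse)})
/-- The equational theory of the variety `SL` of semilattice monoids. -/
def θSL : Con FM := fiCon {(xL, xL^2), (xL*yL, yL*xL)}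

/-- `u` is a factor (contiguous subword) of `w`. -/
def IsFactor (u w : FM) : Prop := ∃ p q : FM, p * u * q = w

lemma isFactor_left {a b w : FM} (h : IsFactor (a * b) w) : IsFactor a w := by
  obtain ⟨p, q, hpq⟩ := h
  exact ⟨p, b * q, by rw [← hpq]; simp [mul_assoc]⟩

lemma isFactor_right {a b w : FM} (h : IsFactor (a * b) w) : IsFactor b w := by
  obtain ⟨p, q, hpq⟩ := h
  exact ⟨p * a, q, by rw [← hpq]; simp [mul_assoc]⟩

/-- The Rees congruence associated with the ideal of non-factors of `w`. -/
def reesCon (w : FM) : Con FM where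
  r u v := u = v ∨ (¬ IsFactor u w ∧ ¬ IsFactor v w)
  iseqv := by
    refine ⟨fun _ => Or.inl rfl, ?_, ?_⟩
    · intro a b h
      rcases h with rfl | ⟨h1, h2⟩
      · exact Or.inl rfl
      · exact Or.inr ⟨h2, h1⟩
    · intro a b c h h'
      rcases h with rfl | ⟨h1, h2⟩
      · exact h'
      · rcases h' with rfl | ⟨h3, h4⟩
        · exact Or.inr ⟨h1, h2⟩
        · exact Or.inr ⟨h1, h4⟩
  mul' := by
    rintro a b c d (rfl | ⟨h1, h2⟩) (rfl | ⟨h3, h4⟩)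
    · exact Or.inl rfl
    · exact Or.inr ⟨fun h => h3 (isFactor_right h), fun h => h4 (isFactor_right h)⟩
    · exact Or.inr ⟨fun h => h1 (isFactor_left h), fun h => h2 (isFactor_left h)⟩
    · exact Or.inr ⟨fun h => h1 (isFactor_left h), fun h => h2 (isFactor_left h)⟩

/-- The Rees quotient monoid `S(w)`. -/
abbrev SMon (w : FM) : Type := (reesCon w).Quotient

/-- The number of occurrences of the letter `a` in the word `w`. -/
def occ (w : FM) (a : ℕ) : ℕ := (FreeMonoid.toList w).count a

/-- A word in which every letter occurs at most once. -/
def LinearW (w : FM) : Prop := ∀ a : ℕ, occ w a ≤ 1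

/-- Assemble the word `b0 * t_1 * b_1 * ⋯ * t_m * b_m` from a first block and a list
of (simple letter, block) pairs. -/
def assemble (b0 : FM) (rest : List (ℕ × FM)) : FM :=
  b0 * (rest.map (fun p => FreeMonoid.of p.1 * p.2)).prod

/-- `(b0, rest)` is the decomposition of `w` into alternating simple letters and blocks
consisting of multiple letters. -/
def IsDecomposition (w : FM) (b0 : FM) (rest : List (ℕ × FM)) : Prop :=
  w = assemble b0 rest ∧
  (∀ p ∈ rest, occ w p.1 = 1) ∧
  (∀ a ∈ FreeMonoid.toList b0, 2 ≤ occ w a) ∧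
  (∀ p ∈ rest, ∀ a ∈ FreeMonoid.toList p.2, 2 ≤ occ w a)

/-- The identity `u ≈ v` is linear-balanced. -/
def LinearBalanced (u v : FM) : Prop :=
  ∃ (b0 c0 : FM) (urest vrest : List (ℕ × FM)),
    IsDecomposition u b0 urest ∧ IsDecomposition v c0 vrest ∧
    urest.map Prod.fst = vrest.map Prod.fst ∧
    ∀ a : ℕ, (2 ≤ occ u a ∨ 2 ≤ occ v a) →
      occ b0 a = occ c0 a ∧ occ b0 a ≤ 1 ∧
      ∀ q ∈ urest.zip vrest, occ q.1.2 a = occ q.2.2 a ∧ occ q.1.2 a ≤ 1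

/-- `w` is an isoterm for `θ`. -/
def IsIsoterm (θ : Con FM) (w : FM) : Prop := ∀ w' : FM, θ w w' → w' = w


section Sigma3Aux
variable {M : Type*} [Monoid M]

private lemma elem_sigma3' (h : MSatisfies M idσ3) (a b c d e : M) :
    a * (b * (a * (c * (d * (c * e))))) = a * (b * (c * (a * (d * (c * e))))) := by
  have h2 := h (FreeMonoid.lift (fun k =>
    if k = 0 then a else if k = 3 then b else if k = 1 then c else d))
  simp only [idσ3, xL, sL, yL, tL, map_mul, FreeMonoid.lift_eval_of] at h2
  norm_num at h2
  have h3 := congrArg (· * e) h2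
  simpa [mul_assoc] using h3

private lemma elem_comm' (h : MSatisfies M (xL ^ 2 * yL, yL * xL ^ 2)) (a b : M) :
    a * a * b = b * (a * a) := by
  have h2 := h (FreeMonoid.lift (fun k => if k = 0 then a else b))
  simpa [xL, yL, map_mul, pow_two, mul_assoc] using h2

private lemma bubble' (K5 : ∀ a b c d e : M,
      a*(b*(a*(c*(d*(c*e))))) = a*(b*(c*(a*(d*(c*e)))))) (u p₁ p₂ : M) :
    ∀ (vs : List M) (mid tail : M),
      (∀ v ∈ vs, ∃ t₁ t₂ : M, tail = t₁ * (v * t₂)) →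
      p₁ * (u * (p₂ * (vs.prod * (u * (mid * tail))))) =
      p₁ * (u * (p₂ * (u * (vs.prod * (mid * tail))))) := by
  intro vs
  induction vs using List.reverseRecOn with
  | nil => intro mid tail _; simp
  | append_singleton vs' v ih =>
    intro mid tail htail
    obtain ⟨t₁, t₂, ht⟩ := htail v (by simp)
    have step : p₁ * (u * (p₂ * (vs'.prod * (v * (u * (mid * (t₁ * (v * t₂)))))))) =
                p₁ * (u * (p₂ * (vs'.prod * (u * (v * (mid * (t₁ * (v * t₂)))))))) := by
      have h := congrArg (p₁ * ·) (K5 u (p₂ * vs'.prod) v (mid * t₁) t₂)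
      simpa [mul_assoc] using h.symm
    calc p₁ * (u * (p₂ * ((vs' ++ [v]).prod * (u * (mid * tail)))))
        = p₁ * (u * (p₂ * (vs'.prod * (v * (u * (mid * (t₁ * (v * t₂)))))))) := by
          simp [ht, mul_assoc]
      _ = p₁ * (u * (p₂ * (vs'.prod * (u * (v * (mid * (t₁ * (v * t₂)))))))) := step
      _ = p₁ * (u * (p₂ * (vs'.prod * (u * ((v * mid) * tail))))) := by
          simp [ht, mul_assoc]
      _ = p₁ * (u * (p₂ * (u * (vs'.prod * ((v * mid) * tail))))) :=
          ih (v * mid) tail (fun w hw => htail w (by simp [hw]))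
      _ = p₁ * (u * (p₂ * (u * ((vs' ++ [v]).prod * (mid * tail))))) := by
          simp [ht, mul_assoc]

private lemma claim1' {ι : Type*} (K5 : ∀ a b c d e : M,
      a*(b*(a*(c*(d*(c*e))))) = a*(b*(c*(a*(d*(c*e)))))) (A C X : M) (U V : ι → M) :
    ∀ (l : List ι) (vp : List M) (E : M),
      (∀ i ∈ l, ∃ p q, A = p * (U i * q)) →
      (∀ i ∈ l, ∃ p q, C = p * (V i * q)) →
      (∀ v ∈ vp, ∃ p q, C = p * (v * q)) →
      A * (E * (X * (vp.prod * ((l.map fun i => U i * V i).prod * (X * C))))) =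
      A * (E * ((l.map U).prod * (X * (vp.prod * ((l.map V).prod * (X * C)))))) := by
  intro l
  induction l with
  | nil => intro vp E _ _ _; simp
  | cons i l' ih =>
    intro vp E hA hC hvp
    obtain ⟨p, q, hpq⟩ := hA i (by simp)
    have hVi : ∃ p q, C = p * (V i * q) := hC i (by simp)
    calc A * (E * (X * (vp.prod * (((i :: l').map fun j => U j * V j).prod * (X * C)))))
        = p * (U i * ((q * (E * X)) * (vp.prod * (U i * ((V i * ((l'.map fun j => U j * V j).prod * X)) * C))))) := by
          rw [hpq]; simp [mul_assoc]
      _ = p * (U i * ((q * (E * X)) * (U i * (vp.prod * ((V i * ((l'.map fun j => U j * V j).prod * X)) * C))))) :=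
          bubble' K5 (U i) p (q * (E * X)) vp _ C hvp
      _ = p * (U i * ((q * E) * (X * (U i * ((vp.prod * (V i * (l'.map fun j => U j * V j).prod)) * (X * C)))))) := by
          simp [mul_assoc]
      _ = p * (U i * ((q * E) * (U i * (X * ((vp.prod * (V i * (l'.map fun j => U j * V j).prod)) * (X * C)))))) :=
          (congrArg (p * ·) (K5 (U i) (q * E) X (vp.prod * (V i * (l'.map fun j => U j * V j).prod)) C)).symm
      _ = A * ((E * U i) * (X * ((vp ++ [V i]).prod * ((l'.map fun j => U j * V j).prod * (X * C))))) := by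
          rw [hpq]; simp [mul_assoc]
      _ = A * ((E * U i) * ((l'.map U).prod * (X * ((vp ++ [V i]).prod * ((l'.map V).prod * (X * C)))))) :=
          ih (vp ++ [V i]) (E * U i) (fun j hj => hA j (by simp [hj]))
            (fun j hj => hC j (by simp [hj]))
            (by intro v hv
                rcases List.mem_append.mp hv with h | h
                · exact hvp v h
                · simp at h; subst h; exact hVi)
      _ = A * (E * (((i :: l').map U).prod * (X * (vp.prod * (((i :: l').map V).prod * (X * C)))))) := by
          simp [mul_assoc]

private lemma claim2' {ι : Type*} (K5 : ∀ a b c d e : M,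
      a*(b*(a*(c*(d*(c*e))))) = a*(b*(c*(a*(d*(c*e)))))) (A C : M) (U V : ι → M) :
    ∀ (l : List ι) (vp : List M) (E : M),
      (∀ i ∈ l, ∃ p q, A = p * (U i * q)) →
      (∀ i ∈ l, ∃ p q, C = p * (V i * q)) →
      (∀ v ∈ vp, ∃ p q, C = p * (v * q)) →
      A * (E * (vp.prod * ((l.map fun i => U i * V i).prod * C))) =
      A * (E * ((l.map U).prod * (vp.prod * ((l.map V).prod * C)))) := by
  intro l
  induction l with
  | nil => intro vp E _ _ _; simp
  | cons i l' ih =>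
    intro vp E hA hC hvp
    obtain ⟨p, q, hpq⟩ := hA i (by simp)
    have hVi : ∃ p q, C = p * (V i * q) := hC i (by simp)
    calc A * (E * (vp.prod * (((i :: l').map fun j => U j * V j).prod * C)))
        = p * (U i * ((q * E) * (vp.prod * (U i * ((V i * (l'.map fun j => U j * V j).prod) * C))))) := by
          rw [hpq]; simp [mul_assoc]
      _ = p * (U i * ((q * E) * (U i * (vp.prod * ((V i * (l'.map fun j => U j * V j).prod) * C))))) :=
          bubble' K5 (U i) p (q * E) vp _ C hvp
      _ = A * ((E * U i) * ((vp ++ [V i]).prod * ((l'.map fun j => U j * V j).prod * C))) := by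
          rw [hpq]; simp [mul_assoc]
      _ = A * ((E * U i) * ((l'.map U).prod * ((vp ++ [V i]).prod * ((l'.map V).prod * C)))) :=
          ih (vp ++ [V i]) (E * U i) (fun j hj => hA j (by simp [hj]))
            (fun j hj => hC j (by simp [hj]))
            (by intro v hv
                rcases List.mem_append.mp hv with h | h
                · exact hvp v h
                · simp at h; subst h; exact hVi)
      _ = A * (E * (((i :: l').map U).prod * (vp.prod * (((i :: l').map V).prod * C)))) := by
          simp [mul_assoc]

private lemma core' {ι : Type*} (K5 : ∀ a b c d e : M,
      a*(b*(a*(c*(d*(c*e))))) = a*(b*(c*(a*(d*(c*e))))))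
    (C2 : ∀ a b : M, a * a * b = b * (a * a)) (A C X : M) (U V : ι → M)
    (l : List ι)
    (hA : ∀ i ∈ l, ∃ p q, A = p * (U i * q))
    (hC : ∀ i ∈ l, ∃ p q, C = p * (V i * q)) :
    A * (X * ((l.map fun i => U i * V i).prod * (X * C))) =
    A * (X * (X * ((l.map fun i => U i * V i).prod * C))) := by
  have hV : ∀ v ∈ l.map V, ∃ p q, C = p * (v * q) := by
    intro v hv
    obtain ⟨i, hi, rfl⟩ := List.mem_map.mp hv
    exact hC i hi
  calc A * (X * ((l.map fun i => U i * V i).prod * (X * C)))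
      = A * (1 * (X * (([] : List M).prod * ((l.map fun i => U i * V i).prod * (X * C))))) := by simp
    _ = A * (1 * ((l.map U).prod * (X * (([] : List M).prod * ((l.map V).prod * (X * C)))))) :=
        claim1' K5 A C X U V l [] 1 hA hC (by simp)
    _ = (A * (l.map U).prod) * (X * (1 * ((l.map V).prod * (X * (1 * C))))) := by
        simp [mul_assoc]
    _ = (A * (l.map U).prod) * (X * (1 * (X * ((l.map V).prod * (1 * C))))) :=
        bubble' K5 X (A * (l.map U).prod) 1 (l.map V) 1 C hV
    _ = A * ((l.map U).prod * ((X * X) * ((l.map V).prod * C))) := by simp [mul_assoc]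
    _ = A * (((l.map U).prod * (X * X)) * ((l.map V).prod * C)) := by simp [mul_assoc]
    _ = A * (((X * X) * (l.map U).prod) * ((l.map V).prod * C)) := by rw [(C2 X (l.map U).prod).symm]
    _ = A * ((X * X) * ((l.map U).prod * (([] : List M).prod * ((l.map V).prod * C)))) := by
        simp [mul_assoc]
    _ = A * ((X * X) * (([] : List M).prod * ((l.map fun i => U i * V i).prod * C))) :=
        (claim2' K5 A C U V l [] (X * X) hA hC (by simp)).symm
    _ = A * (X * (X * ((l.map fun i => U i * V i).prod * C))) := by simp [mul_assoc]

private lemma prod_split' (g : ℕ → M) {k n : ℕ} (hk : k < n) :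
    ∃ p q : M, ((List.range n).map g).prod = p * (g k * q) := by
  have hmem : g k ∈ (List.range n).map g :=
    List.mem_map_of_mem (List.mem_range.mpr hk)
  obtain ⟨s, t, hst⟩ := List.append_of_mem hmem
  exact ⟨s.prod, t.prod, by rw [hst]; simp [mul_assoc]⟩

private lemma map_prodRange' (φ : FM →* M) (n : ℕ) (f : ℕ → FM) :
    φ (prodRange n f) = ((List.range n).map (fun j => φ (f j))).prod := by
  unfold prodRange
  rw [map_list_prod, List.map_map]
  rfl

private lemma map_prodFin' (φ : FM →* M) (n : ℕ) (f : Fin n → FM) :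
    φ (prodFin n f) = ((List.finRange n).map (fun j => φ (f j))).prod := by
  unfold prodFin
  rw [map_list_prod, List.map_map]
  rfl

end Sigma3Aux

/-- **Lemma (Section 3.3).** The identities `σ3 : xsxyty ≈ xsyxty` and
`x²y ≈ yx²` imply the identity `w_n[π,τ] ≈ w_n'[π,τ]` for all `n ≥ 1` and all
permutations `π, τ`. -/
theorem sigma3_implies_w_identity (M : Type*) [Monoid M]
    (hσ3 : MSatisfies M idσ3) (hcomm : MSatisfies M (xL ^ 2 * yL, yL * xL ^ 2)) :
    ∀ n : ℕ, 1 ≤ n → ∀ π τ : Equiv.Perm (Fin n),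
      MSatisfies M (wWord n π τ, wWord' n π τ) := by
  intro n _ π τ φ
  have K5 := elem_sigma3' hσ3
  have C2 := elem_comm' hcomm
  have hA : ∀ i ∈ List.finRange n, ∃ p q : M,
      φ (prodRange n fun j => zV j * tV j) = p * (φ (zV (π i)) * q) := by
    intro i _
    obtain ⟨p, q, h⟩ := prod_split' (fun j => φ (zV j * tV j)) (π i).isLt
    refine ⟨p, φ (tV (π i)) * q, ?_⟩
    rw [map_prodRange' φ n (fun j => zV j * tV j), h]
    simp [map_mul, mul_assoc]
  have hC : ∀ i ∈ List.finRange n, ∃ p q : M,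
      φ (prodRange n fun j => tV (n + j) * zV (n + j)) = p * (φ (zV (n + τ i)) * q) := by
    intro i _
    obtain ⟨p, q, h⟩ := prod_split' (fun j => φ (tV (n + j) * zV (n + j))) (τ i).isLt
    refine ⟨p * φ (tV (n + τ i)), q, ?_⟩
    rw [map_prodRange' φ n (fun j => tV (n + j) * zV (n + j)), h]
    simp [map_mul, mul_assoc]
  have hF := map_prodFin' φ n (fun i => zV (π i) * zV (n + τ i))
  simp only [map_mul] at hF
  show φ (wWord n π τ) = φ (wWord' n π τ)
  simp only [wWord, wWord', map_mul, hF, mul_assoc]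
  exact core' K5 C2 (φ (prodRange n fun j => zV j * tV j))
    (φ (prodRange n fun j => tV (n + j) * zV (n + j))) (φ xL)
    (fun i => φ (zV (π i))) (fun i => φ (zV (n + τ i)))
    (List.finRange n) hA hC
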